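/- Let T>0, 0<α<1, p>1, A,B≥0, and let v∈C^1([0,T),ℝ) satisfy the fractional differential inequality ᶜD^α_{0|t} v(t) ≥ B(|v(t)|^p − A) for all t∈[0,T), with initial condition v(0) > A^{1/p}. Then v(t) ≥ A^{1/p} for all t∈[0,T). -/

import Mathlib

open Real MeasureTheory

/-- Left-sided Caputo fractional derivative of order `α`:
`ᶜD^α_{0|t} f(t) = (1/Γ(1-α)) ∫_0^t (t-s)^(-α) f'(s) ds`. -/
noncomputable def caputoLeft (α : ℝ) (f : ℝ → ℝ) (t : ℝ) : ℝ :=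
  (1 / Real.Gamma (1 - α)) * ∫ s in (0:ℝ)..t, (t - s) ^ (-α) * deriv f s

/-- Key analytic lemma: if `v` is `C¹` on `[0,T)`, `t ∈ (0,T)` is a minimum point of `v`
on `[0,t]`, and `v t < v 0`, then the Caputo-type integral at `t` is strictly negative. -/
lemma caputo_integral_neg (T α : ℝ) (hα0 : 0 < α) (hα1 : α < 1)
    (v : ℝ → ℝ) (hv : ContDiffOn ℝ 1 v (Set.Ico 0 T)) (t : ℝ) (h0t : 0 < t) (htT : t < T)
    (hmin : ∀ s ∈ Set.Icc (0:ℝ) t, v t ≤ v s) (h0 : v t < v 0) :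
    (∫ s in (0:ℝ)..t, (t - s) ^ (-α) * deriv v s) < 0 := by
  have hIcc : Set.Icc (0:ℝ) t ⊆ Set.Ico 0 T := fun x hx => ⟨hx.1, lt_of_le_of_lt hx.2 htT⟩
  -- two-sided derivative at interior points
  have hd : ∀ x ∈ Set.Ioo (0:ℝ) T, HasDerivAt v (deriv v x) x := by
    intro x hx
    have hnh : Set.Ico (0:ℝ) T ∈ nhds x :=
      Filter.mem_of_superset (isOpen_Ioo.mem_nhds hx) Set.Ioo_subset_Ico_self
    exact ((hv.differentiableOn one_ne_zero).differentiableAt hnh).hasDerivAt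
  -- continuity of deriv on the open interval
  have hc' : ContinuousOn (deriv v) (Set.Ioo 0 T) :=
    (hv.mono Set.Ioo_subset_Ico_self).continuousOn_deriv_of_isOpen isOpen_Ioo le_rfl
  -- bound on the derivative on (0, t]
  obtain ⟨M, hM⟩ : ∃ M, ∀ x ∈ Set.Icc (0:ℝ) t, ‖derivWithin v (Set.Ico 0 T) x‖ ≤ M :=
    isCompact_Icc.exists_bound_of_continuousOn
      ((hv.continuousOn_derivWithin (uniqueDiffOn_Ico 0 T) le_rfl).mono hIcc)
  have hMd : ∀ s ∈ Set.Ioc (0:ℝ) t, |deriv v s| ≤ M := by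
    intro s hs
    have hnh : Set.Ico (0:ℝ) T ∈ nhds s :=
      Filter.mem_of_superset (isOpen_Ioo.mem_nhds ⟨hs.1, lt_of_le_of_lt hs.2 htT⟩)
        Set.Ioo_subset_Ico_self
    rw [← derivWithin_of_mem_nhds hnh]
    exact hM s ⟨hs.1.le, hs.2⟩
  -- integrability of the weight
  have hg : IntervalIntegrable (fun s => (t - s) ^ (-α)) volume 0 t := by
    have h1 : IntervalIntegrable (fun s : ℝ => s ^ (-α)) volume 0 t :=
      intervalIntegral.intervalIntegrable_rpow' (by linarith)
    simpa using (h1.comp_sub_left t).symm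
  -- integrability of the integrand
  have hf : IntervalIntegrable (fun s => (t - s) ^ (-α) * deriv v s) volume 0 t := by
    rw [intervalIntegrable_iff_integrableOn_Ioc_of_le h0t.le]
    have hgi : IntegrableOn (fun s => (t - s) ^ (-α)) (Set.Ioc 0 t) volume := by
      rw [← intervalIntegrable_iff_integrableOn_Ioc_of_le h0t.le]; exact hg
    refine Integrable.mono' (hgi.const_mul M) ?_ ?_
    · exact hgi.aestronglyMeasurable.mul (measurable_deriv v).aestronglyMeasurable
    · refine (ae_restrict_iff' measurableSet_Ioc).2 (Filter.Eventually.of_forall ?_)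
      intro s hs
      have h1 : (0:ℝ) ≤ (t - s) ^ (-α) := Real.rpow_nonneg (by linarith [hs.2]) _
      rw [norm_mul, Real.norm_eq_abs, Real.norm_eq_abs, abs_of_nonneg h1, mul_comm]
      exact mul_le_mul_of_nonneg_right (hMd s hs) h1
  set f : ℝ → ℝ := fun s => (t - s) ^ (-α) * deriv v s with hfdef
  set G : ℝ → ℝ := fun x => ∫ s in (0:ℝ)..x, f s with hGdef
  have hGc : ContinuousOn G (Set.uIcc 0 t) :=
    intervalIntegral.continuousOn_primitive_interval' hf Set.left_mem_uIcc
  have huIcc : Set.uIcc (0:ℝ) t = Set.Icc 0 t := Set.uIcc_of_le h0t.le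
  -- the filter
  set L := nhdsWithin (0:ℝ) (Set.Ioi 0) with hLdef
  have hsmall : ∀ᶠ ε in L, ε ∈ Set.Ioo 0 (t/2) := by
    rw [hLdef]
    refine Filter.eventually_iff_exists_mem.2 ⟨Set.Ioo 0 (t/2), ?_, fun x hx => hx⟩
    exact Ioo_mem_nhdsGT_of_mem ⟨le_rfl, by linarith⟩
  -- limits of the endpoints
  have htendsub : Filter.Tendsto (fun ε : ℝ => t - ε) L (nhds t) := by
    have h1 : Filter.Tendsto (fun ε : ℝ => t - ε) (nhds 0) (nhds (t - 0)) :=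
      (continuous_const.sub continuous_id).tendsto 0
    simpa using h1.mono_left nhdsWithin_le_nhds
  have htend0 : Filter.Tendsto (fun ε : ℝ => ε) L (nhds 0) :=
    Filter.tendsto_id.mono_left nhdsWithin_le_nhds
  have hL1 : Filter.Tendsto (fun ε => G (t - ε)) L (nhds (G t)) := by
    have h1 : ContinuousWithinAt G (Set.uIcc 0 t) t := hGc t Set.right_mem_uIcc
    refine h1.tendsto.comp (tendsto_nhdsWithin_iff.2 ⟨htendsub, ?_⟩)
    filter_upwards [hsmall] with ε hε
    rw [huIcc]; exact ⟨by linarith [hε.1, hε.2], by linarith [hε.1]⟩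
  have hL2 : Filter.Tendsto (fun ε => G ε) L (nhds (G 0)) := by
    have h1 : ContinuousWithinAt G (Set.uIcc 0 t) 0 := hGc 0 Set.left_mem_uIcc
    refine h1.tendsto.comp (tendsto_nhdsWithin_iff.2 ⟨htend0, ?_⟩)
    filter_upwards [hsmall] with ε hε
    rw [huIcc]; exact ⟨hε.1.le, by linarith [hε.2]⟩
  have hG0 : G 0 = 0 := intervalIntegral.integral_same
  have hLHS : Filter.Tendsto (fun ε => G (t - ε) - G ε) L (nhds (G t)) := by
    have h1 := hL1.sub hL2
    rwa [hG0, sub_zero] at h1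
  -- limit of the right-hand side
  have hR2 : Filter.Tendsto (fun ε : ℝ => (t - ε) ^ (-α) * (v ε - v t)) L
      (nhds (t ^ (-α) * (v 0 - v t))) := by
    have h1 : Filter.Tendsto (fun ε : ℝ => (t - ε) ^ (-α)) L (nhds (t ^ (-α))) := by
      have hc : ContinuousAt (fun x : ℝ => x ^ (-α)) t :=
        Real.continuousAt_rpow_const t (-α) (Or.inl h0t.ne')
      exact hc.tendsto.comp htendsub
    have h2 : Filter.Tendsto (fun ε : ℝ => v ε) L (nhds (v 0)) := by
      have hcv : ContinuousWithinAt v (Set.Ico 0 T) 0 :=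
        hv.continuousOn 0 ⟨le_rfl, by linarith⟩
      refine hcv.tendsto.mono_left (nhdsWithin_le_of_mem ?_)
      exact Filter.mem_of_superset
        (Ioo_mem_nhdsGT_of_mem ⟨le_rfl, (by linarith : (0:ℝ) < T)⟩)
        Set.Ioo_subset_Ico_self
    exact h1.mul (h2.sub tendsto_const_nhds)
  have hR1 : Filter.Tendsto (fun ε : ℝ => ε ^ (-α) * (v (t - ε) - v t)) L (nhds 0) := by
    have hdt : HasDerivAt v (deriv v t) t := hd t ⟨h0t, htT⟩
    have hslope : Filter.Tendsto (slope v t) (nhdsWithin t {t}ᶜ) (nhds (deriv v t)) :=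
      hasDerivAt_iff_tendsto_slope.1 hdt
    have hmap : Filter.Tendsto (fun ε : ℝ => t - ε) L (nhdsWithin t {t}ᶜ) := by
      refine tendsto_nhdsWithin_iff.2 ⟨htendsub, ?_⟩
      filter_upwards [hsmall] with ε hε
      simp only [Set.mem_compl_iff, Set.mem_singleton_iff]
      intro h; linarith [hε.1]
    have hslope' : Filter.Tendsto (fun ε : ℝ => (v (t - ε) - v t) / (-ε)) L
        (nhds (deriv v t)) := by
      have h1 := hslope.comp hmap
      refine h1.congr (fun ε => ?_)
      rw [Function.comp_apply, slope_def_field]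
      ring_nf
    have hpow : Filter.Tendsto (fun ε : ℝ => -(ε ^ (1 - α))) L (nhds 0) := by
      have hc : ContinuousAt (fun x : ℝ => x ^ (1 - α)) 0 :=
        Real.continuousAt_rpow_const 0 (1 - α) (Or.inr (by linarith))
      have h1 : Filter.Tendsto (fun x : ℝ => x ^ (1 - α)) L (nhds ((0:ℝ) ^ (1 - α))) :=
        hc.tendsto.comp htend0
      rw [Real.zero_rpow (by intro h; linarith [h] : (1:ℝ) - α ≠ 0)] at h1
      simpa using h1.neg
    have h2 := hslope'.mul hpow
    rw [mul_zero] at h2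
    refine h2.congr' ?_
    filter_upwards [hsmall] with ε hε
    have hε0 : (0:ℝ) < ε := hε.1
    have h1 : ε ^ (1 - α) = ε * ε ^ (-α) := by
      rw [show (1:ℝ) - α = 1 + (-α) by ring, Real.rpow_add hε0, Real.rpow_one]
    rw [h1]
    field_simp
  have hR : Filter.Tendsto
      (fun ε : ℝ => ε ^ (-α) * (v (t - ε) - v t) - (t - ε) ^ (-α) * (v ε - v t)) L
      (nhds (0 - t ^ (-α) * (v 0 - v t))) := hR1.sub hR2
  -- the eventual inequality via integration by parts
  have hev : ∀ᶠ ε in L, G (t - ε) - G ε ≤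
      ε ^ (-α) * (v (t - ε) - v t) - (t - ε) ^ (-α) * (v ε - v t) := by
    filter_upwards [hsmall] with ε hε
    have hε0 : (0:ℝ) < ε := hε.1
    have hεt : ε < t / 2 := hε.2
    have hab : ε ≤ t - ε := by linarith
    have huIcc2 : Set.uIcc ε (t - ε) = Set.Icc ε (t - ε) := Set.uIcc_of_le hab
    have hsub : Set.Icc ε (t - ε) ⊆ Set.Ioo 0 T := fun x hx =>
      ⟨lt_of_lt_of_le hε0 hx.1, by linarith [hx.2]⟩
    have hsub2 : Set.Icc ε (t - ε) ⊆ Set.Icc 0 t := fun x hx =>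
      ⟨le_trans hε0.le hx.1, by linarith [hx.2]⟩
    -- split the integral
    have hsplit : G (t - ε) - G ε = ∫ s in ε..(t - ε), f s := by
      have h1 : IntervalIntegrable f volume 0 ε :=
        hf.mono_set (Set.uIcc_subset_uIcc Set.left_mem_uIcc
          (by rw [huIcc]; exact ⟨hε0.le, by linarith⟩))
      have h2 : IntervalIntegrable f volume ε (t - ε) :=
        hf.mono_set (Set.uIcc_subset_uIcc
          (by rw [huIcc]; exact ⟨hε0.le, by linarith⟩)
          (by rw [huIcc]; exact ⟨by linarith, by linarith⟩))
      have h3 := intervalIntegral.integral_add_adjacent_intervals h1 h2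
      simp only [hGdef]
      linarith [h3]
    -- integration by parts
    set u : ℝ → ℝ := fun s => (t - s) ^ (-α) with hudef
    set u' : ℝ → ℝ := fun s => α * (t - s) ^ (-α - 1) with hu'def
    have hu : ∀ x ∈ Set.uIcc ε (t - ε), HasDerivAt u (u' x) x := by
      intro x hx
      rw [huIcc2] at hx
      have hx0 : (0:ℝ) < t - x := by linarith [hx.2]
      have h1 : HasDerivAt (fun s : ℝ => t - s) (-1) x := by
        simpa using (hasDerivAt_id x).const_sub t
      have h2 := (Real.hasDerivAt_rpow_const (p := -α) (Or.inl hx0.ne')).comp x h1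
      convert h2 using 1
      · rfl
      · rfl
      · rfl
      · simp only [hu'def]; ring
    have hv2 : ∀ x ∈ Set.uIcc ε (t - ε), HasDerivAt v (deriv v x) x := by
      intro x hx; rw [huIcc2] at hx; exact hd x (hsub hx)
    have hu'c : ContinuousOn u' (Set.Icc ε (t - ε)) := by
      refine continuousOn_const.mul (ContinuousOn.rpow_const
        ((continuous_const.sub continuous_id).continuousOn) (fun x hx => Or.inl ?_))
      have hx0 : (0:ℝ) < t - x := by linarith [hx.2]
      exact hx0.ne'
    have hu'int : IntervalIntegrable u' volume ε (t - ε) := by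
      apply ContinuousOn.intervalIntegrable
      rw [huIcc2]; exact hu'c
    have hvc : ContinuousOn v (Set.Icc ε (t - ε)) :=
      hv.continuousOn.mono ((hsub2.trans hIcc))
    have hvint : IntervalIntegrable (deriv v) volume ε (t - ε) := by
      apply ContinuousOn.intervalIntegrable
      rw [huIcc2]; exact hc'.mono hsub
    have hibp : ∫ x in ε..(t - ε), u x * deriv v x
        = u (t - ε) * v (t - ε) - u ε * v ε - ∫ x in ε..(t - ε), u' x * v x :=
      intervalIntegral.integral_mul_deriv_eq_deriv_mul hu hv2 hu'int hvint
    have hmono : (∫ x in ε..(t - ε), u' x * v t) ≤ ∫ x in ε..(t - ε), u' x * v x := by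
      apply intervalIntegral.integral_mono_on hab
      · apply ContinuousOn.intervalIntegrable
        rw [huIcc2]; exact hu'c.mul continuousOn_const
      · apply ContinuousOn.intervalIntegrable
        rw [huIcc2]; exact hu'c.mul hvc
      · intro x hx
        have h0' : 0 ≤ u' x := by
          simp only [hu'def]
          exact mul_nonneg hα0.le (Real.rpow_nonneg (by linarith [hx.2]) _)
        exact mul_le_mul_of_nonneg_left (hmin x (hsub2 hx)) h0'
    have hFTC : (∫ x in ε..(t - ε), u' x) = u (t - ε) - u ε :=
      intervalIntegral.integral_eq_sub_of_hasDerivAt hu hu'int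
    have hconst : (∫ x in ε..(t - ε), u' x * v t) = (u (t - ε) - u ε) * v t := by
      rw [intervalIntegral.integral_mul_const, hFTC]
    have hue : u (t - ε) = ε ^ (-α) := by
      simp only [hudef, sub_sub_cancel]
    have huε : u ε = (t - ε) ^ (-α) := rfl
    calc G (t - ε) - G ε = ∫ x in ε..(t - ε), u x * deriv v x := by
          rw [hsplit]
      _ = u (t - ε) * v (t - ε) - u ε * v ε - ∫ x in ε..(t - ε), u' x * v x := hibp
      _ ≤ u (t - ε) * v (t - ε) - u ε * v ε - (u (t - ε) - u ε) * v t := by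
          rw [← hconst]; linarith [hmono]
      _ = ε ^ (-α) * (v (t - ε) - v t) - (t - ε) ^ (-α) * (v ε - v t) := by
          rw [hue, huε]; ring
  -- conclusion
  have hfinal : G t ≤ 0 - t ^ (-α) * (v 0 - v t) :=
    le_of_tendsto_of_tendsto hLHS hR hev
  have hpos : 0 < t ^ (-α) * (v 0 - v t) :=
    mul_pos (Real.rpow_pos_of_pos h0t _) (by linarith)
  have hGt : G t < 0 := by linarith
  exact hGt

theorem stmt5 (T α p A B : ℝ) (hT : 0 < T) (hα0 : 0 < α) (hα1 : α < 1) (hp : 1 < p)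
    (hA : 0 ≤ A) (hB : 0 ≤ B) (v : ℝ → ℝ)
    (hv : ContDiffOn ℝ 1 v (Set.Ico 0 T))
    (hineq : ∀ t ∈ Set.Ico (0:ℝ) T, B * (|v t| ^ p - A) ≤ caputoLeft α v t)
    (hv0 : A ^ (1 / p) < v 0) :
    ∀ t ∈ Set.Ico (0:ℝ) T, A ^ (1 / p) ≤ v t := by
  intro t ht
  by_contra hcon
  push_neg at hcon
  set c := A ^ (1 / p) with hc
  have hc0 : 0 ≤ c := Real.rpow_nonneg hA _
  have hvcont : ContinuousOn v (Set.Ico 0 T) := hv.continuousOn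
  have hsubK : Set.Icc (0:ℝ) t ⊆ Set.Ico 0 T := fun x hx => ⟨hx.1, lt_of_le_of_lt hx.2 ht.2⟩
  set K := Set.Icc (0:ℝ) t ∩ v ⁻¹' Set.Iic c with hK
  have hKne : K.Nonempty := ⟨t, ⟨ht.1, le_rfl⟩, hcon.le⟩
  have hKclosed : IsClosed K :=
    (hvcont.mono hsubK).preimage_isClosed_of_isClosed isClosed_Icc isClosed_Iic
  have hKbdd : BddBelow K := ⟨0, fun x hx => hx.1.1⟩
  set t₁ := sInf K with ht₁
  have ht₁K : t₁ ∈ K := hKclosed.csInf_mem hKne hKbdd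
  have ht₁0 : 0 ≤ t₁ := ht₁K.1.1
  have ht₁t : t₁ ≤ t := ht₁K.1.2
  have ht₁T : t₁ < T := lt_of_le_of_lt ht₁t ht.2
  have hlt : ∀ s, 0 ≤ s → s < t₁ → c < v s := by
    intro s hs0 hst
    by_contra h
    push_neg at h
    have hsK : s ∈ K := ⟨⟨hs0, le_trans hst.le ht₁t⟩, h⟩
    exact absurd (csInf_le hKbdd hsK) (not_le.2 hst)
  have ht₁pos : 0 < t₁ := by
    rcases lt_or_eq_of_le ht₁0 with h | h
    · exact h
    · exfalso
      have := ht₁K.2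
      rw [← h] at this
      exact absurd this (not_le.2 hv0)
  have hvt₁ : v t₁ = c := by
    refine le_antisymm ht₁K.2 ?_
    have hcv : ContinuousWithinAt v (Set.Ico 0 T) t₁ := hvcont t₁ ⟨ht₁0, ht₁T⟩
    have hmem : Set.Ioo (0:ℝ) t₁ ∈ nhdsWithin t₁ (Set.Iio t₁) := by
      rw [← Set.Ioi_inter_Iio]
      exact Filter.inter_mem (mem_nhdsWithin_of_mem_nhds (isOpen_Ioi.mem_nhds ht₁pos))
        self_mem_nhdsWithin
    have htv : Filter.Tendsto v (nhdsWithin t₁ (Set.Iio t₁)) (nhds (v t₁)) :=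
      hcv.tendsto.mono_left (nhdsWithin_le_of_mem
        (Filter.mem_of_superset hmem (fun x hx => ⟨hx.1.le, lt_trans hx.2 ht₁T⟩)))
    refine ge_of_tendsto htv ?_
    filter_upwards [hmem] with s hs
    exact (hlt s hs.1.le hs.2).le
  have hmin : ∀ s ∈ Set.Icc (0:ℝ) t₁, v t₁ ≤ v s := by
    intro s hs
    rcases eq_or_lt_of_le hs.2 with h | h
    · rw [h]
    · rw [hvt₁]; exact (hlt s hs.1 h).le
  have h0 : v t₁ < v 0 := by rw [hvt₁]; exact hv0
  have hineq' := hineq t₁ ⟨ht₁0, ht₁T⟩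
  have hp0 : p ≠ 0 := by linarith
  have hval : |v t₁| ^ p - A = 0 := by
    rw [hvt₁, abs_of_nonneg hc0, hc, ← Real.rpow_mul hA, one_div_mul_cancel hp0,
      Real.rpow_one, sub_self]
  rw [hval, mul_zero] at hineq'
  have hneg : caputoLeft α v t₁ < 0 := by
    unfold caputoLeft
    have hI := caputo_integral_neg T α hα0 hα1 v hv t₁ ht₁pos ht₁T hmin h0
    have hΓ : 0 < Real.Gamma (1 - α) := Real.Gamma_pos_of_pos (by linarith)
    have hΓ' : 0 < 1 / Real.Gamma (1 - α) := by positivity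
    exact mul_neg_of_pos_of_neg hΓ' hI
  linarith
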